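/- The Thue-Morse word $\mathbf{t}$ avoids circular $4^+$-powers: for all words $x_1, t, x_2$ with $x_1 t x_2$ a factor of $\mathbf{t}$ and $x_2x_1$ nonempty, if $p$ is a period of $x_2 x_1$ then $|x_2x_1| \leq 4p$. -/

import Mathlib

/-- `u` occurs as a factor of the infinite word `w` (at some position `i`). -/
def FactorOf {α : Type*} (u : List α) (w : ℕ → α) : Prop :=
  ∃ i : ℕ, u = (List.range u.length).map (fun k => w (i + k))

/-- `p` is a period of the finite word `v`. -/
def HasPeriod {α : Type*} (v : List α) (p : ℕ) : Prop :=
  0 < p ∧ p ≤ v.length ∧ ∀ i : ℕ, i + p < v.length → v[i + p]? = v[i]?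

open Fin.NatCast in
/-- The Thue–Morse word: `tm n` is the sum of the binary digits of `n`, mod 2. -/
def tm : ℕ → Fin 2 := fun n => ((Nat.digits 2 n).sum : Fin 2)

lemma tm_two_mul (n : ℕ) : tm (2 * n) = tm n := by
  rcases Nat.eq_zero_or_pos n with h | h
  · simp [h]
  · unfold tm
    rw [Nat.digits_def' (by norm_num : 1 < 2) (by omega : 0 < 2 * n)]
    simp [Nat.mul_div_cancel_left, Nat.mul_mod_right]

lemma tm_two_mul_add_one (n : ℕ) : tm (2 * n + 1) = tm n + 1 := by
  unfold tm
  rw [Nat.digits_def' (by norm_num : 1 < 2) (by omega : 0 < 2 * n + 1)]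
  have h1 : (2 * n + 1) % 2 = 1 := by omega
  have h2 : (2 * n + 1) / 2 = n := by omega
  rw [h1, h2, List.sum_cons]
  apply Fin.ext; simp only [Fin.val_add, Fin.val_natCast]; omega

lemma tm_parity_ne (m : ℕ) : tm (2 * m + 1) ≠ tm (2 * m) := by
  rw [tm_two_mul_add_one, tm_two_mul]
  exact fun h => by revert h; generalize tm m = a; revert a; decide

lemma fin2_resolve : ∀ a b c : Fin 2, a ≠ b → b ≠ c → a = c := by decide

lemma tm_congr {a b : ℕ} (h : a = b) : tm a = tm b := congrArg tm h

lemma tm_no_three_eq (m : ℕ) (h1 : tm m = tm (m + 1)) (h2 : tm (m + 1) = tm (m + 2)) :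
    False := by
  rcases Nat.even_or_odd m with ⟨a, ha⟩ | ⟨a, ha⟩
  · have hm : m = 2 * a := by omega
    exact tm_parity_ne a (by rw [← hm, ← h1, hm])
  · have hm : m + 1 = 2 * (a + 1) := by omega
    have hm2 : m + 2 = 2 * (a + 1) + 1 := by omega
    exact tm_parity_ne (a + 1) (by rw [← hm2, ← h2, hm])

lemma tm_no_overlap : ∀ p : ℕ, 0 < p → ∀ i : ℕ,
    ¬ (∀ k, k ≤ p → tm (i + k + p) = tm (i + k)) := by
  intro p
  induction p using Nat.strong_induction_on with
  | _ p IH =>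
    intro hp i h
    rcases Nat.lt_trichotomy p 2 with hlt | hrest
    · -- p = 1
      have hp1 : p = 1 := by omega
      subst hp1
      rcases Nat.even_or_odd i with ⟨m, hm⟩ | ⟨m, hm⟩
      · have hi : i = 2 * m := by omega
        have := h 0 (by omega)
        rw [hi] at this
        exact tm_parity_ne m (by simpa using this)
      · have hi : i + 1 = 2 * (m + 1) := by omega
        have := h 1 (by omega)
        exact tm_parity_ne (m + 1)
          (by rw [← hi]; simpa [show i + 1 + 1 = 2 * (m+1) + 1 by omega, ← hi] using this)
    · rcases Nat.even_or_odd p with ⟨q, hq⟩ | ⟨q, hq⟩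
      · -- p = 2q, q ≥ 1 : descend
        have hpq : p = 2 * q := by omega
        have hq1 : 0 < q := by omega
        rcases Nat.even_or_odd i with ⟨a, ha⟩ | ⟨a, ha⟩
        · have hi : i = 2 * a := by omega
          apply IH q (by omega) hq1 a
          intro k hk
          have hh := h (2 * k) (by omega)
          have e1 : i + 2 * k + p = 2 * (a + k + q) := by omega
          have e2 : i + 2 * k = 2 * (a + k) := by omega
          rw [e1, e2, tm_two_mul, tm_two_mul] at hh
          exact hh
        · have hi : i = 2 * a + 1 := by omega
          apply IH q (by omega) hq1 a
          intro k hk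
          have hh := h (2 * k) (by omega)
          have e1 : i + 2 * k + p = 2 * (a + k + q) + 1 := by omega
          have e2 : i + 2 * k = 2 * (a + k) + 1 := by omega
          rw [e1, e2, tm_two_mul_add_one, tm_two_mul_add_one] at hh
          exact add_right_cancel hh
      · -- p odd, p ≥ 3
        have hp3 : 3 ≤ p := by omega
        have step1 : ∀ k, k < p → tm (i + k + 1) ≠ tm (i + k) := by
          intro k hk
          rcases Nat.even_or_odd (i + k) with ⟨m, hm⟩ | ⟨m, hm⟩
          · have e : i + k = 2 * m := by omega
            rw [e, show 2 * m + 1 = 2 * m + 1 from rfl]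
            exact tm_parity_ne m
          · have hA := h k (by omega)
            have hB := h (k + 1) (by omega)
            have e1 : i + k + p = 2 * (m + q + 1) := by omega
            have e2 : i + (k + 1) + p = 2 * (m + q + 1) + 1 := by omega
            have e3 : i + (k + 1) = i + k + 1 := by omega
            rw [e3] at hB
            rw [e2, e3] at *
            intro hEq
            apply tm_parity_ne (m + q + 1)
            calc tm (2 * (m + q + 1) + 1) = tm (i + k + 1) := by
                  rw [← hB]; exact tm_congr (by omega)
              _ = tm (i + k) := hEq
              _ = tm (2 * (m + q + 1)) := by rw [← hA, ← e1]
        have step2 : ∀ k, k < 2 * p → tm (i + k + 1) ≠ tm (i + k) := by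
          intro k hk
          by_cases hkp : k < p
          · exact step1 k hkp
          · have hA := h (k - p) (by omega)
            have hB := h (k - p + 1) (by omega)
            have e1 : i + (k - p) + p = i + k := by omega
            have e2 : i + (k - p + 1) + p = i + k + 1 := by omega
            have e3 : i + (k - p + 1) = i + (k - p) + 1 := by omega
            rw [e1] at hA
            rw [e2, e3] at hB
            rw [hA, hB]
            exact step1 (k - p) (by omega)
        have step3 : ∀ k, k + 2 ≤ 2 * p → tm (i + k + 2) = tm (i + k) := by
          intro k hk
          have h1 := step2 k (by omega)
          have h2 := step2 (k + 1) (by omega)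
          have e : i + (k + 1) + 1 = i + k + 2 := by omega
          have e2 : i + (k + 1) = i + k + 1 := by omega
          rw [e, e2] at h2
          exact fin2_resolve _ _ _ h2 h1
        rcases Nat.even_or_odd i with ⟨m, hm⟩ | ⟨m, hm⟩
        · have hi : i = 2 * m := by omega
          have h1 := step3 0 (by omega)
          have h2 := step3 2 (by omega)
          rw [show i + 0 + 2 = 2 * (m + 1) by omega, show i + 0 = 2 * m by omega,
            tm_two_mul, tm_two_mul] at h1
          rw [show i + 2 + 2 = 2 * (m + 2) by omega, show i + 2 = 2 * (m + 1) by omega,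
            tm_two_mul, tm_two_mul] at h2
          exact tm_no_three_eq m h1.symm h2.symm
        · have hi : i = 2 * m + 1 := by omega
          have h1 := step3 1 (by omega)
          have h2 := step3 3 (by omega)
          rw [show i + 1 + 2 = 2 * (m + 2) by omega, show i + 1 = 2 * (m + 1) by omega,
            tm_two_mul, tm_two_mul] at h1
          rw [show i + 3 + 2 = 2 * (m + 3) by omega, show i + 3 = 2 * (m + 2) by omega,
            tm_two_mul, tm_two_mul] at h2
          exact tm_no_three_eq (m + 1) h1.symm h2.symm

/-- the Thue–Morse word avoids circular `4⁺`-powers. -/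
theorem thueMorse_avoids_circular_four_plus_powers :
    ∀ x₁ t x₂ : List (Fin 2), FactorOf (x₁ ++ t ++ x₂) tm → x₂ ++ x₁ ≠ [] →
      ∀ p : ℕ, HasPeriod (x₂ ++ x₁) p → (x₂ ++ x₁).length ≤ 4 * p := by
  intro x₁ t x₂ hfac _ p hper
  obtain ⟨i, hw⟩ := hfac
  obtain ⟨hp, _, hperiod⟩ := hper
  by_contra hlt
  push_neg at hlt
  rw [List.length_append] at hlt
  -- values of the factor
  have hwj : ∀ j (hj : j < (x₁ ++ t ++ x₂).length),
      (x₁ ++ t ++ x₂)[j] = tm (i + j) := by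
    intro j hj
    rw [List.getElem_of_eq hw hj]
    simp
  have hx1 : ∀ j (hj : j < x₁.length), x₁[j] = tm (i + j) := by
    intro j hj
    have hj' : j < (x₁ ++ t ++ x₂).length := by simp; omega
    rw [← hwj j hj']
    rw [List.getElem_append_left (by simp; omega), List.getElem_append_left hj]
  have hx2 : ∀ j (hj : j < x₂.length),
      x₂[j] = tm (i + x₁.length + t.length + j) := by
    intro j hj
    have hj' : x₁.length + t.length + j < (x₁ ++ t ++ x₂).length := by simp; omega
    have := hwj (x₁.length + t.length + j) hj'
    rw [List.getElem_append_right (by simp)] at this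
    have e : x₁.length + t.length + j - (x₁ ++ t).length = j := by simp
    simp only [e] at this
    rw [this]
    exact tm_congr (by omega)
  -- period equalities on the concatenation
  have hvlen : (x₂ ++ x₁).length = x₂.length + x₁.length := List.length_append
  rcases le_or_gt x₂.length (2 * p) with hc | hc
  · -- then x₁ is long: 2p+1 ≤ x₁.length
    have hlong : 2 * p + 1 ≤ x₁.length := by omega
    apply tm_no_overlap p hp i
    intro k hk
    have hper' := hperiod (x₂.length + k) (by omega)
    have e1 : x₂.length + k + p = x₂.length + (k + p) := by omega
    rw [e1, List.getElem?_append_right (by omega),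
      List.getElem?_append_right (by omega)] at hper'
    rw [show x₂.length + (k + p) - x₂.length = k + p by omega,
      show x₂.length + k - x₂.length = k by omega] at hper'
    rw [List.getElem?_eq_getElem (by omega), List.getElem?_eq_getElem (by omega)] at hper'
    have := Option.some.inj hper'
    rw [hx1 (k + p) (by omega), hx1 k (by omega)] at this
    rw [show i + k + p = i + (k + p) by omega]
    exact this
  · -- x₂ is long: 2p+1 ≤ x₂.length
    have hlong : 2 * p + 1 ≤ x₂.length := by omega
    apply tm_no_overlap p hp (i + x₁.length + t.length)
    intro k hk
    have hper' := hperiod k (by omega)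
    rw [List.getElem?_append_left (by omega), List.getElem?_append_left (by omega)] at hper'
    rw [List.getElem?_eq_getElem (by omega), List.getElem?_eq_getElem (by omega)] at hper'
    have := Option.some.inj hper'
    rw [hx2 (k + p) (by omega), hx2 k (by omega)] at this
    rw [show i + x₁.length + t.length + k + p = i + x₁.length + t.length + (k + p) by omega]
    exact this
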